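/- Define sequences of polynomials by a_0 = 1, a_1(x) = x-2, a_{2k}(x) = (x-4)a_{2k-1}(x) - a_{2k-2}(x) and a_{2k+1}(x) = (x-2)a_{2k}(x) - a_{2k-1}(x) for k ≥ 1 (i.e. a_n is the characteristic polynomial of the n×n tridiagonal matrix with alternating diagonal (2,4,2,4,...) and sub/super-diagonals 1). Then for all k ≥ 0: a_{2k}(x) = P_k((x-3)²) and a_{2k+1}(x) = (x-2)·Q_k((x-3)²), where (P_n) and (Q_n) are the Fibonacci product polynomials. -/
import Mathlib


open Polynomial

/-- Fibonacci product polynomials `P`. -/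
noncomputable def fibP : ℕ → Polynomial ℤ
  | 0 => 1
  | 1 => X - 2
  | n + 2 => (X - 3) * fibP (n + 1) - fibP n

/-- Fibonacci product polynomials `Q`. -/
noncomputable def fibQ : ℕ → Polynomial ℤ
  | 0 => 1
  | 1 => X - 3
  | n + 2 => (X - 3) * fibQ (n + 1) - fibQ n

/-- The sequence `a_n`: `a_0 = 1`, `a_1 = x - 2`, and
`a_{2k} = (x-4)a_{2k-1} - a_{2k-2}`, `a_{2k+1} = (x-2)a_{2k} - a_{2k-1}`. -/
noncomputable def aSeq : ℕ → Polynomial ℤ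
  | 0 => 1
  | 1 => X - 2
  | n + 2 => (X - if n % 2 = 0 then 4 else 2) * aSeq (n + 1) - aSeq n

lemma aSeq_step (m : ℕ) :
    aSeq (m + 4) = (X ^ 2 - 6 * X + 6) * aSeq (m + 2) - aSeq m := by
  have h3 : aSeq (m + 4) = (X - if (m+2) % 2 = 0 then 4 else 2) * aSeq (m + 3) - aSeq (m + 2) := rfl
  have h4 : aSeq (m + 3) = (X - if (m+1) % 2 = 0 then 4 else 2) * aSeq (m + 2) - aSeq (m + 1) := rfl
  have h5 : aSeq (m + 2) = (X - if m % 2 = 0 then 4 else 2) * aSeq (m + 1) - aSeq m := rfl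
  rcases Nat.mod_two_eq_zero_or_one m with hm | hm
  · rw [show (m+2) % 2 = 0 from by omega] at h3
    rw [show (m+1) % 2 = 1 from by omega] at h4
    rw [hm] at h5
    norm_num at h3 h4 h5
    rw [h3, h4, h5]
    ring
  · rw [show (m+2) % 2 = 1 from by omega] at h3
    rw [show (m+1) % 2 = 0 from by omega] at h4
    rw [hm] at h5
    norm_num at h3 h4 h5
    rw [h3, h4, h5]
    ring

theorem stmt16 (k : ℕ) :
    aSeq (2 * k) = (fibP k).comp ((X - 3) ^ 2) ∧
    aSeq (2 * k + 1) = (X - 2) * (fibQ k).comp ((X - 3) ^ 2) := by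
  induction k using Nat.twoStepInduction with
  | zero =>
    constructor
    · simp [aSeq, fibP]
    · simp [aSeq, fibQ]
  | one =>
    constructor
    · show aSeq 2 = (fibP 1).comp ((X - 3) ^ 2)
      show (X - if 0 % 2 = 0 then 4 else 2) * aSeq 1 - aSeq 0 = _
      simp [aSeq, fibP]
      ring
    · show aSeq 3 = (X - 2) * (fibQ 1).comp ((X - 3) ^ 2)
      show (X - if 1 % 2 = 0 then 4 else 2) * aSeq 2 - aSeq 1 = _
      have h2 : aSeq 2 = (X - if 0 % 2 = 0 then 4 else 2) * aSeq 1 - aSeq 0 := rfl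
      rw [h2]
      simp [aSeq, fibQ]
      ring
  | more n ih1 ih2 =>
    obtain ⟨hP0, hQ0⟩ := ih1
    obtain ⟨hP1, hQ1⟩ := ih2
    rw [show 2 * (n + 1) = 2 * n + 2 from by ring] at hP1
    rw [show 2 * (n + 1) + 1 = (2 * n + 1) + 2 from by ring] at hQ1
    constructor
    · rw [show 2 * (n + 2) = 2 * n + 4 from by ring, aSeq_step, hP1, hP0]
      rw [show fibP (n + 2) = (X - 3) * fibP (n + 1) - fibP n from rfl]
      simp only [sub_comp, mul_comp, X_comp, Polynomial.ofNat_comp]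
      ring
    · rw [show 2 * (n + 2) + 1 = (2 * n + 1) + 4 from by ring, aSeq_step, hQ1, hQ0]
      rw [show fibQ (n + 2) = (X - 3) * fibQ (n + 1) - fibQ n from rfl]
      simp only [sub_comp, mul_comp, X_comp, Polynomial.ofNat_comp]
      ring
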